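/- The von Mises–Fisher mechanism satisfies metric local differential privacy with parameter κ under the chordal metric: for all unit vectors u, u' in S^{d-1} and all measurable S ⊆ S^{d-1}, Pr[M(u) ∈ S] ≤ exp(κ‖u − u'‖₂) · Pr[M(u') ∈ S], where M(u) has density f(y|u) = C_d(κ)·exp(κ·uᵀy) with respect to the uniform measure on the sphere. -/

import Mathlib

open MeasureTheory Real

/-- **vMF mechanism satisfies metric LDP under the chordal metric.**
The mechanism `M μ` has density `C_d(κ) · exp(κ ⟪μ, y⟫)` with respect to the
uniform measure `ν` on the sphere `S^{d-1}`. For unit vectors `u, u'` and any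
measurable `S`, `Pr[M(u) ∈ S] ≤ exp(κ‖u − u'‖₂) · Pr[M(u') ∈ S]`. -/
theorem vmf_metric_ldp
    (d : ℕ) (κ C : ℝ) (hκ : 0 ≤ κ) (hC : 0 < C)
    (ν : Measure (EuclideanSpace ℝ (Fin d)))
    (hν : ν {y : EuclideanSpace ℝ (Fin d) | ‖y‖ ≠ 1} = 0)
    (M : EuclideanSpace ℝ (Fin d) → Measure (EuclideanSpace ℝ (Fin d)))
    (hM : ∀ μ, M μ = ν.withDensity
      (fun y => ENNReal.ofReal (C * Real.exp (κ * (inner ℝ μ y : ℝ)))))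
    (u u' : EuclideanSpace ℝ (Fin d)) (hu : ‖u‖ = 1) (hu' : ‖u'‖ = 1)
    (S : Set (EuclideanSpace ℝ (Fin d))) (hS : MeasurableSet S) :
    M u S ≤ ENNReal.ofReal (Real.exp (κ * ‖u - u'‖)) * M u' S := by
  rw [hM u, hM u', withDensity_apply _ hS, withDensity_apply _ hS,
    ← lintegral_const_mul' _ _ ENNReal.ofReal_ne_top]
  refine lintegral_mono_ae ?_
  have hres : (ν.restrict S) {y : EuclideanSpace ℝ (Fin d) | ‖y‖ ≠ 1} = 0 :=
    le_antisymm (le_trans (Measure.restrict_apply_le _ _) hν.le) (zero_le)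
  filter_upwards [(measure_eq_zero_iff_ae_notMem.mp hres)] with y hy
  simp only [Set.mem_setOf_eq, not_not] at hy
  rw [← ENNReal.ofReal_mul (Real.exp_nonneg _)]
  apply ENNReal.ofReal_le_ofReal
  rw [mul_comm (Real.exp _), mul_assoc, ← Real.exp_add]
  refine mul_le_mul_of_nonneg_left (Real.exp_le_exp.2 ?_) hC.le
  have hcs : (inner ℝ (u - u') y : ℝ) ≤ ‖u - u'‖ := by
    calc (inner ℝ (u - u') y : ℝ) ≤ ‖u - u'‖ * ‖y‖ := real_inner_le_norm _ _
    _ = ‖u - u'‖ := by rw [hy, mul_one]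
  have : (inner ℝ u y : ℝ) ≤ (inner ℝ u' y : ℝ) + ‖u - u'‖ := by
    have := inner_sub_left (𝕜 := ℝ) u u' y
    linarith
  nlinarith [mul_le_mul_of_nonneg_left this hκ]
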